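/- Let H be the discrete Heisenberg group with presentation ⟨a, b, c | [a,b] = c, [a,c] = [b,c] = 1⟩, and for n ≥ 1 let Hₙ be the subgroup generated by aⁿ, bⁿ, and c. Then the derived subgroup of Hₙ is generated by c^{n²}, the center of Hₙ is generated by c, and hence the index of the derived subgroup in the center of Hₙ equals n². Consequently, the groups Hₙ for distinct n are pairwise non-isomorphic. -/

import Mathlib

/-- The discrete Heisenberg group, realized as triples `(x, y, z)` of integers
corresponding to the upper unitriangular matrix with entries `x = M₁₂`,
`y = M₂₃`, `z = M₁₃`. -/
@[ext]
structure Heis where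
  x : ℤ
  y : ℤ
  z : ℤ

instance : Mul Heis := ⟨fun p q => ⟨p.x + q.x, p.y + q.y, p.z + q.z + p.x * q.y⟩⟩
instance : One Heis := ⟨⟨0, 0, 0⟩⟩
instance : Inv Heis := ⟨fun p => ⟨-p.x, -p.y, -p.z + p.x * p.y⟩⟩

@[simp] lemma Heis.mul_x (p q : Heis) : (p * q).x = p.x + q.x := rfl
@[simp] lemma Heis.mul_y (p q : Heis) : (p * q).y = p.y + q.y := rfl
@[simp] lemma Heis.mul_z (p q : Heis) : (p * q).z = p.z + q.z + p.x * q.y := rfl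
@[simp] lemma Heis.one_x : (1 : Heis).x = 0 := rfl
@[simp] lemma Heis.one_y : (1 : Heis).y = 0 := rfl
@[simp] lemma Heis.one_z : (1 : Heis).z = 0 := rfl
@[simp] lemma Heis.inv_x (p : Heis) : p⁻¹.x = -p.x := rfl
@[simp] lemma Heis.inv_y (p : Heis) : p⁻¹.y = -p.y := rfl
@[simp] lemma Heis.inv_z (p : Heis) : p⁻¹.z = -p.z + p.x * p.y := rfl

instance : Group Heis where
  mul_assoc p q r := by ext <;> simp <;> ring
  one_mul p := by ext <;> simp
  mul_one p := by ext <;> simp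
  inv_mul_cancel p := by ext <;> simp

/-- The generator `a` (elementary matrix `E₁₂`). -/
def Heis.a : Heis := ⟨1, 0, 0⟩
/-- The generator `b` (elementary matrix `E₂₃`). -/
def Heis.b : Heis := ⟨0, 1, 0⟩
/-- The central generator `c = [a,b]` (elementary matrix `E₁₃`). -/
def Heis.c : Heis := ⟨0, 0, 1⟩

/-- The subgroup `Hₙ = ⟨aⁿ, bⁿ, c⟩` of the Heisenberg group. -/
def HeisSub (n : ℕ) : Subgroup Heis :=
  Subgroup.closure {Heis.a ^ n, Heis.b ^ n, Heis.c}

lemma c_mem (n : ℕ) : Heis.c ∈ HeisSub n :=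
  Subgroup.subset_closure (by simp)

/-- `c` as an element of `Hₙ`. -/
def cIn (n : ℕ) : HeisSub n := ⟨Heis.c, c_mem n⟩

open scoped commutatorElement

-- auxiliary lemmas
lemma xonly_zpow (x : ℤ) (k : ℤ) : (⟨x, 0, 0⟩ : Heis) ^ k = ⟨k * x, 0, 0⟩ := by
  induction k using Int.induction_on with
  | zero => ext <;> simp
  | succ k ih => rw [zpow_add_one, ih]; ext <;> simp <;> ring
  | pred k ih => rw [zpow_sub_one, ih]; ext <;> simp <;> ring

lemma yonly_zpow (y : ℤ) (k : ℤ) : (⟨0, y, 0⟩ : Heis) ^ k = ⟨0, k * y, 0⟩ := by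
  induction k using Int.induction_on with
  | zero => ext <;> simp
  | succ k ih => rw [zpow_add_one, ih]; ext <;> simp <;> ring
  | pred k ih => rw [zpow_sub_one, ih]; ext <;> simp <;> ring

lemma zonly_zpow (z : ℤ) (k : ℤ) : (⟨0, 0, z⟩ : Heis) ^ k = ⟨0, 0, k * z⟩ := by
  induction k using Int.induction_on with
  | zero => ext <;> simp
  | succ k ih => rw [zpow_add_one, ih]; ext <;> simp <;> ring
  | pred k ih => rw [zpow_sub_one, ih]; ext <;> simp <;> ring

lemma a_pow (n : ℕ) : Heis.a ^ n = (⟨n, 0, 0⟩ : Heis) := by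
  have := xonly_zpow 1 n
  simpa [Heis.a, zpow_natCast] using this

lemma b_pow (n : ℕ) : Heis.b ^ n = (⟨0, n, 0⟩ : Heis) := by
  have := yonly_zpow 1 n
  simpa [Heis.b, zpow_natCast] using this

lemma c_zpow (k : ℤ) : Heis.c ^ k = (⟨0, 0, k⟩ : Heis) := by
  simpa [Heis.c] using zonly_zpow 1 k

lemma mem_heisSub {n : ℕ} {p : Heis} :
    p ∈ HeisSub n ↔ (n : ℤ) ∣ p.x ∧ (n : ℤ) ∣ p.y := by
  constructor
  · intro hp
    induction hp using Subgroup.closure_induction with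
    | mem g hg =>
      rcases hg with rfl | rfl | rfl
      · simp [a_pow]
      · simp [b_pow]
      · simp [Heis.c]
    | one => simp
    | mul g h _ _ ihg ihh => exact ⟨dvd_add ihg.1 ihh.1, dvd_add ihg.2 ihh.2⟩
    | inv g _ ih => exact ⟨(dvd_neg).mpr ih.1, (dvd_neg).mpr ih.2⟩
  · rintro ⟨⟨u, hu⟩, ⟨v, hv⟩⟩
    have key : p = (Heis.a ^ n) ^ u * (Heis.b ^ n) ^ v *
        Heis.c ^ (p.z - (n * u) * (n * v)) := by
      rw [a_pow, b_pow, xonly_zpow, yonly_zpow, c_zpow]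
      ext <;> simp [hu, hv] <;> ring
    rw [key]
    exact mul_mem (mul_mem
      (zpow_mem (Subgroup.subset_closure (by simp)) u)
      (zpow_mem (Subgroup.subset_closure (by simp)) v))
      (zpow_mem (c_mem n) _)

lemma heis_comm (p q : Heis) : ⁅p, q⁆ = (⟨0, 0, p.x * q.y - q.x * p.y⟩ : Heis) := by
  ext <;> simp [commutatorElement_def] <;> ring

lemma cIn_zpow_val (n : ℕ) (k : ℤ) : ((cIn n ^ k : HeisSub n) : Heis) = ⟨0, 0, k⟩ := by
  rw [SubgroupClass.coe_zpow]
  exact c_zpow k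

lemma cIn_zpow_inj (n : ℕ) {j k : ℤ} (h : cIn n ^ j = cIn n ^ k) : j = k := by
  have h1 : (⟨0, 0, j⟩ : Heis) = ⟨0, 0, k⟩ := by
    rw [← cIn_zpow_val n j, ← cIn_zpow_val n k, h]
  exact congrArg Heis.z h1

lemma coe_comm (n : ℕ) (p q : HeisSub n) :
    ((⁅p, q⁆ : HeisSub n) : Heis) = ⁅(p : Heis), (q : Heis)⁆ := rfl

lemma commEq (n : ℕ) :
    commutator ↥(HeisSub n) = Subgroup.closure {cIn n ^ (n ^ 2)} := by
  apply le_antisymm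
  · rw [commutator_def, Subgroup.commutator_le]
    intro p _ q _
    obtain ⟨hpx, hpy⟩ := mem_heisSub.mp p.2
    obtain ⟨hqx, hqy⟩ := mem_heisSub.mp q.2
    obtain ⟨t, ht⟩ : ((n : ℤ) ^ 2) ∣ ((p : Heis).x * (q : Heis).y - (q : Heis).x * (p : Heis).y) := by
      obtain ⟨u, hu⟩ := hpx; obtain ⟨v, hv⟩ := hpy
      obtain ⟨w, hw⟩ := hqx; obtain ⟨s, hs⟩ := hqy
      exact ⟨u * s - w * v, by rw [hu, hv, hw, hs]; ring⟩
    have key : ⁅p, q⁆ = (cIn n ^ (n ^ 2)) ^ t := by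
      apply Subtype.ext
      have h1 : (((cIn n ^ (n ^ 2)) ^ t : HeisSub n) : Heis) = (Heis.c ^ (n ^ 2)) ^ t := by
        rw [SubgroupClass.coe_zpow, SubgroupClass.coe_pow]; rfl
      rw [coe_comm, h1, heis_comm, ← zpow_natCast Heis.c (n ^ 2), ← zpow_mul, c_zpow]
      ext <;> simp [ht] <;> push_cast <;> ring
    rw [key]
    exact zpow_mem (Subgroup.subset_closure (Set.mem_singleton _)) t
  · rw [Subgroup.closure_le, Set.singleton_subset_iff]
    have key : cIn n ^ (n ^ 2) =
        ⁅(⟨Heis.a ^ n, Subgroup.subset_closure (by simp)⟩ : HeisSub n),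
          (⟨Heis.b ^ n, Subgroup.subset_closure (by simp)⟩ : HeisSub n)⁆ := by
      apply Subtype.ext
      have h1 : ((cIn n ^ (n ^ 2) : HeisSub n) : Heis) = Heis.c ^ (n ^ 2) := by
        rw [SubgroupClass.coe_pow]; rfl
      rw [h1, coe_comm, heis_comm, ← zpow_natCast Heis.c (n ^ 2), c_zpow]
      ext <;> simp [a_pow, b_pow] <;> push_cast <;> ring
    rw [key, commutator_def]
    exact Subgroup.commutator_mem_commutator (Subgroup.mem_top _) (Subgroup.mem_top _)

lemma centerEq (n : ℕ) (hn : 1 ≤ n) :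
    Subgroup.center ↥(HeisSub n) = Subgroup.closure {cIn n} := by
  have hn' : (n : ℤ) ≠ 0 := Int.natCast_ne_zero.mpr (Nat.one_le_iff_ne_zero.mp hn)
  apply le_antisymm
  · intro g hg
    have ha := (Subgroup.mem_center_iff.mp hg)
      ⟨Heis.a ^ n, Subgroup.subset_closure (by simp)⟩
    have hb := (Subgroup.mem_center_iff.mp hg)
      ⟨Heis.b ^ n, Subgroup.subset_closure (by simp)⟩
    have ha' : (Heis.a ^ n) * (g : Heis) = (g : Heis) * (Heis.a ^ n) :=
      congrArg Subtype.val ha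
    have hb' : (Heis.b ^ n) * (g : Heis) = (g : Heis) * (Heis.b ^ n) :=
      congrArg Subtype.val hb
    rw [a_pow] at ha'
    rw [b_pow] at hb'
    have ha'' := congrArg Heis.z ha'
    have hb'' := congrArg Heis.z hb'
    simp at ha'' hb''
    have hn'' : n ≠ 0 := Nat.one_le_iff_ne_zero.mp hn
    have hy : (g : Heis).y = 0 := ha''.resolve_left hn''
    have hx : (g : Heis).x = 0 := hb''.resolve_right hn''
    have key : g = cIn n ^ (g : Heis).z := by
      apply Subtype.ext
      rw [cIn_zpow_val]
      ext
      · exact hx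
      · exact hy
      · rfl
    rw [key]
    exact zpow_mem (Subgroup.subset_closure (Set.mem_singleton _)) _
  · rw [Subgroup.closure_le, Set.singleton_subset_iff]
    rw [SetLike.mem_coe, Subgroup.mem_center_iff]
    intro g
    apply Subtype.ext
    show (g : Heis) * Heis.c = Heis.c * (g : Heis)
    ext <;> simp [Heis.c] <;> omega

lemma indexEq (n : ℕ) (hn : 1 ≤ n) :
    ((commutator ↥(HeisSub n)).subgroupOf (Subgroup.center ↥(HeisSub n))).index = n ^ 2 := by
  have hcen : Subgroup.center ↥(HeisSub n) = (zpowersHom _ (cIn n)).range := by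
    rw [Subgroup.range_zpowersHom, Subgroup.zpowers_eq_closure]
    exact centerEq n hn
  have hpow : cIn n ^ ((n : ℕ) ^ 2) = cIn n ^ ((n : ℤ) ^ 2) := by
    rw [← zpow_natCast]; norm_cast
  have hcomap : (commutator ↥(HeisSub n)).comap (zpowersHom _ (cIn n))
      = AddSubgroup.toSubgroup (AddSubgroup.zmultiples (((n : ℤ)) ^ 2)) := by
    ext k
    rw [Subgroup.mem_comap, commEq n, ← Subgroup.zpowers_eq_closure, Subgroup.mem_zpowers_iff]
    constructor
    · rintro ⟨t, ht⟩
      rw [hpow, ← zpow_mul] at ht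
      have heq := cIn_zpow_inj n ht
      exact Int.mem_zmultiples_iff.mpr (Dvd.intro t heq)
    · intro hk
      obtain ⟨t, ht⟩ := Int.mem_zmultiples_iff.mp (hk : Multiplicative.toAdd k ∈ _)
      refine ⟨t, ?_⟩
      show (cIn n ^ (n ^ 2)) ^ t = cIn n ^ (Multiplicative.toAdd k)
      rw [hpow, ← zpow_mul, ht]
      rfl
  show (commutator ↥(HeisSub n)).relIndex (Subgroup.center ↥(HeisSub n)) = n ^ 2
  rw [hcen, ← Subgroup.index_comap, hcomap, AddSubgroup.index_toSubgroup,
    Int.index_zmultiples, Int.natAbs_pow]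
  simp

lemma map_center_eq {G G' : Type*} [Group G] [Group G'] (e : G ≃* G') :
    (Subgroup.center G).map e.toMonoidHom = Subgroup.center G' := by
  ext g'
  constructor
  · rintro ⟨g, hg, rfl⟩
    rw [Subgroup.mem_center_iff]
    intro h'
    have h1 := (Subgroup.mem_center_iff.mp hg) (e.symm h')
    calc h' * e.toMonoidHom g = e (e.symm h' * g) := by simp
      _ = e (g * e.symm h') := by rw [h1]
      _ = e.toMonoidHom g * h' := by simp
  · intro hg'
    refine ⟨e.symm g', Subgroup.mem_center_iff.mpr fun h => ?_, by simp⟩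
    apply e.injective
    simp only [map_mul, MulEquiv.apply_symm_apply]
    exact (Subgroup.mem_center_iff.mp hg') (e h)

lemma index_iso_invariant {G G' : Type*} [Group G] [Group G'] (e : G ≃* G') :
    ((commutator G).subgroupOf (Subgroup.center G)).index
      = ((commutator G').subgroupOf (Subgroup.center G')).index := by
  have hcomm : (commutator G).map e.toMonoidHom = commutator G' := by
    rw [commutator_def, commutator_def, Subgroup.map_commutator,
      Subgroup.map_top_of_surjective _ e.surjective]
  have hcomap : (commutator G').comap e.toMonoidHom = commutator G := by
    rw [← hcomm, Subgroup.comap_map_eq_self_of_injective e.injective]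
  show (commutator G).relIndex (Subgroup.center G)
      = (commutator G').relIndex (Subgroup.center G')
  rw [← hcomap, Subgroup.relIndex_comap, map_center_eq]

/-- For `n ≥ 1`, the derived subgroup of `Hₙ = ⟨aⁿ, bⁿ, c⟩` is generated by
`c^{n²}`, its center is generated by `c`, the index of the derived subgroup in
the center is `n²`, and consequently the `Hₙ` are pairwise non-isomorphic. -/
theorem heisenberg_finite_index_subgroups :
    (∀ n : ℕ, 1 ≤ n →
      commutator ↥(HeisSub n) = Subgroup.closure {cIn n ^ (n ^ 2)} ∧
      Subgroup.center ↥(HeisSub n) = Subgroup.closure {cIn n} ∧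
      ((commutator ↥(HeisSub n)).subgroupOf
        (Subgroup.center ↥(HeisSub n))).index = n ^ 2) ∧
    ∀ m n : ℕ, 1 ≤ m → 1 ≤ n → m ≠ n →
      IsEmpty (↥(HeisSub m) ≃* ↥(HeisSub n)) := by
  refine ⟨fun n hn => ⟨commEq n, centerEq n hn, indexEq n hn⟩,
    fun m n hm hn hmn => ⟨fun e => hmn ?_⟩⟩
  have h := index_iso_invariant e
  rw [indexEq m hm, indexEq n hn] at h
  exact Nat.pow_left_injective (by norm_num) h
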